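/- arXiv:1605.03313 — 2 statements merged into one kernel-verified Lean document; each statement's English description precedes it below -/
import Mathlib

section
/- Let Ω be a symmetric positive definite p×p matrix whose every row has at most K+1 nonzero entries and whose eigenvalues lie in [M⁻¹, M], and let Σ = Ω⁻¹. Then for every nonzero vector u ∈ ℝᵖ, ‖Σu‖_∞ / ‖u‖_∞ ≥ (K+1)^{-1/2} M⁻¹. -/
open Matrix

private lemma row_sq_sum_le {p : ℕ} (M : ℝ) (hM : 1 ≤ M)
    (Ω : Matrix (Fin p) (Fin p) ℝ) (hΩ : Ω.PosDef)
    (heig : ∀ i, M⁻¹ ≤ hΩ.1.eigenvalues i ∧ hΩ.1.eigenvalues i ≤ M) (i : Fin p) :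
    ∑ j, (Ω i j)^2 ≤ M^2 := by
  set U : Matrix (Fin p) (Fin p) ℝ := (hΩ.1.eigenvectorUnitary : Matrix (Fin p) (Fin p) ℝ) with hUdef
  have hU : U * star U = 1 := mem_unitaryGroup_iff.mp hΩ.1.eigenvectorUnitary.2
  have hU' : star U * U = 1 := mem_unitaryGroup_iff'.mp hΩ.1.eigenvectorUnitary.2
  have hspec := hΩ.1.spectral_theorem
  have hsq : Ω * Ω = U * diagonal (fun j => (hΩ.1.eigenvalues j)^2) * star U := by
    conv_lhs => rw [hspec]
    have h2 : (RCLike.ofReal ∘ hΩ.1.eigenvalues : Fin p → ℝ) = hΩ.1.eigenvalues := rfl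
    rw [h2, Unitary.conjStarAlgAut_apply, ← hUdef]
    calc U * diagonal hΩ.1.eigenvalues * star U * (U * diagonal hΩ.1.eigenvalues * star U)
        = U * diagonal hΩ.1.eigenvalues * (star U * U) * (diagonal hΩ.1.eigenvalues * star U) := by
          noncomm_ring
      _ = U * diagonal (fun j => (hΩ.1.eigenvalues j)^2) * star U := by
          rw [hU', mul_one, mul_assoc, ← mul_assoc (diagonal _), diagonal_mul_diagonal,
            ← mul_assoc]
          congr 2; ext j; ring
  have hsym : ∀ j, Ω j i = Ω i j := fun j => by
    conv_lhs => rw [← hΩ.1.eq]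
    rfl
  have key : ∑ j, (Ω i j)^2 = (Ω * Ω) i i := by
    rw [Matrix.mul_apply]
    exact Finset.sum_congr rfl fun j _ => by rw [hsym j]; ring
  rw [key, hsq]
  have hdiag : (U * diagonal (fun j => (hΩ.1.eigenvalues j)^2) * star U) i i
      = ∑ j, (hΩ.1.eigenvalues j)^2 * (U i j)^2 := by
    rw [Matrix.mul_apply]
    refine Finset.sum_congr rfl fun j _ => ?_
    rw [Matrix.mul_apply, Finset.sum_eq_single j ?_ (by simp)]
    · simp [diagonal, star_apply]; ring
    · intro b _ hb; simp [diagonal, hb]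
  rw [hdiag]
  have hone : ∑ j, (U i j)^2 = 1 := by
    have := congrArg (fun A => A i i) hU
    simpa [Matrix.mul_apply, Matrix.one_apply, star_apply, sq] using this
  calc ∑ j, (hΩ.1.eigenvalues j)^2 * (U i j)^2
      ≤ ∑ j, M^2 * (U i j)^2 := by
        refine Finset.sum_le_sum fun j _ => mul_le_mul_of_nonneg_right ?_ (sq_nonneg _)
        have h1 := (heig j).1; have h2 := (heig j).2
        have hpos : (0:ℝ) < M⁻¹ := by positivity
        nlinarith
    _ = M^2 := by rw [← Finset.mul_sum, hone, mul_one]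

/-- Proposition 1: for Ω ∈ G(M, K) (symmetric positive definite, at most K+1 nonzero
entries per row, spectrum in [M⁻¹, M]) and Σ = Ω⁻¹, every nonzero u ∈ ℝᵖ satisfies
‖Σu‖_∞ / ‖u‖_∞ ≥ (K+1)^(-1/2) M⁻¹.  Here the norm on `Fin p → ℝ` is the sup norm. -/
theorem cone_invertibility_lower_bound {p K : ℕ} (hK : 0 < K) (M : ℝ) (hM : 1 ≤ M)
    (Ω : Matrix (Fin p) (Fin p) ℝ) (hΩ : Ω.PosDef)
    (hsparse : ∀ i, ((Finset.univ.filter fun j => Ω i j ≠ 0)).card ≤ K + 1)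
    (heig : ∀ i, M⁻¹ ≤ hΩ.1.eigenvalues i ∧ hΩ.1.eigenvalues i ≤ M) :
    ∀ u : Fin p → ℝ, u ≠ 0 →
      (Real.sqrt (K + 1))⁻¹ * M⁻¹ ≤ ‖(Ω⁻¹).mulVec u‖ / ‖u‖ := by
  intro u hu
  have hMpos : (0:ℝ) < M := lt_of_lt_of_le one_pos hM
  have hsqrt : (0:ℝ) < Real.sqrt (K + 1) := Real.sqrt_pos.mpr (by positivity)
  -- row absolute sums bounded by sqrt(K+1) * M
  have hrow : ∀ i, ∑ j, |Ω i j| ≤ Real.sqrt (K + 1) * M := by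
    intro i
    set s := (Finset.univ.filter fun j => Ω i j ≠ 0) with hs
    have h1 : ∑ j, |Ω i j| = ∑ j ∈ s, |Ω i j| := by
      rw [Finset.sum_filter]
      refine Finset.sum_congr rfl fun j _ => ?_
      by_cases h : Ω i j = 0 <;> simp [h]
    have h2 : (∑ j ∈ s, |Ω i j|)^2 ≤ (s.card : ℝ) * ∑ j ∈ s, |Ω i j|^2 := by
      exact_mod_cast sq_sum_le_card_mul_sum_sq (s := s) (f := fun j => |Ω i j|)
    have h3 : ∑ j ∈ s, |Ω i j|^2 ≤ M^2 := by
      calc ∑ j ∈ s, |Ω i j|^2 ≤ ∑ j, |Ω i j|^2 :=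
            Finset.sum_le_sum_of_subset_of_nonneg (Finset.subset_univ _)
              (fun j _ _ => sq_nonneg _)
        _ = ∑ j, (Ω i j)^2 := by simp [sq_abs]
        _ ≤ M^2 := row_sq_sum_le M hM Ω hΩ heig i
    have hcard : (s.card : ℝ) ≤ (K : ℝ) + 1 := by exact_mod_cast hsparse i
    have h4 : (∑ j ∈ s, |Ω i j|)^2 ≤ ((K : ℝ) + 1) * M^2 := by
      calc (∑ j ∈ s, |Ω i j|)^2 ≤ (s.card : ℝ) * ∑ j ∈ s, |Ω i j|^2 := h2
        _ ≤ ((K : ℝ) + 1) * M^2 := by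
            apply mul_le_mul hcard h3 (Finset.sum_nonneg fun j _ => sq_nonneg _) (by positivity)
    rw [h1]
    have hnn : 0 ≤ ∑ j ∈ s, |Ω i j| := Finset.sum_nonneg fun j _ => abs_nonneg _
    nlinarith [Real.sq_sqrt (show (0:ℝ) ≤ (K:ℝ) + 1 by positivity),
      Real.sqrt_nonneg ((K:ℝ) + 1), mul_pos hsqrt hMpos]
  -- operator bound: ‖Ω v‖ ≤ sqrt(K+1) M ‖v‖
  have hop : ∀ v : Fin p → ℝ, ‖Ω.mulVec v‖ ≤ Real.sqrt (K + 1) * M * ‖v‖ := by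
    intro v
    rw [pi_norm_le_iff_of_nonneg (by positivity)]
    intro i
    calc ‖Ω.mulVec v i‖ = |∑ j, Ω i j * v j| := rfl
      _ ≤ ∑ j, |Ω i j * v j| := Finset.abs_sum_le_sum_abs _ _
      _ ≤ ∑ j, |Ω i j| * ‖v‖ := by
          refine Finset.sum_le_sum fun j _ => ?_
          rw [abs_mul]
          exact mul_le_mul_of_nonneg_left (norm_le_pi_norm v j) (abs_nonneg _)
      _ = (∑ j, |Ω i j|) * ‖v‖ := by rw [Finset.sum_mul]
      _ ≤ Real.sqrt (K + 1) * M * ‖v‖ :=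
          mul_le_mul_of_nonneg_right (hrow i) (norm_nonneg _)
  have hdet : IsUnit Ω.det := isUnit_iff_ne_zero.mpr hΩ.det_pos.ne'
  have hinv : Ω.mulVec ((Ω⁻¹).mulVec u) = u := by
    rw [Matrix.mulVec_mulVec, Matrix.mul_nonsing_inv Ω hdet, Matrix.one_mulVec]
  have hmain : ‖u‖ ≤ Real.sqrt (K + 1) * M * ‖(Ω⁻¹).mulVec u‖ := by
    conv_lhs => rw [← hinv]
    exact hop _
  have hupos : 0 < ‖u‖ := norm_pos_iff.mpr hu
  rw [le_div_iff₀ hupos]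
  rw [show (Real.sqrt (K + 1))⁻¹ * M⁻¹ = (Real.sqrt (K + 1) * M)⁻¹ by rw [mul_inv]]
  rw [inv_mul_le_iff₀ (by positivity)]
  linarith
end

section
/- Cross-validation risk comparison (deterministic core of Theorem 2b): let Ω̂¹ and Ω̂² be p×p matrices with ‖Ω̂ⁱ − Ω‖_∞ < c ω₀* for i = 1,2 and 0 < c ≤ 1/3, and suppose every nonzero entry of Ω has absolute value at least ω₀ ≥ ω₀*. Let τ₀ = ω₀ − c ω₀*. If for some τ ≥ τ₀ exactly M entries that are nonzero in T_{τ₀}(Ω̂¹) become zero in T_τ(Ω̂¹), then ‖T_τ(Ω̂¹) − Ω̂²‖_F² − ‖T_{τ₀}(Ω̂¹) − Ω̂²‖_F² ≥ M[(ω₀ − c ω₀*)² − (2c ω₀*)²] ≥ M(1 − 3c)(1 + c)(ω₀*)² ≥ 0. -/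
open Matrix
open scoped Classical

/-- Cross-validation risk comparison (deterministic core of Theorem 2b): with Ω̂¹, Ω̂²
entrywise within c·ω₀* of Ω (0 < c ≤ 1/3), minimal nonzero magnitude ω₀ ≥ ω₀* > 0,
τ₀ = ω₀ − c·ω₀*, and τ ≥ τ₀, if exactly M entries nonzero in T_{τ₀}(Ω̂¹) become zero in
T_τ(Ω̂¹), then the increase in squared Frobenius distance to Ω̂² is at least
M[(ω₀ − cω₀*)² − (2cω₀*)²] ≥ M(1 − 3c)(1 + c)(ω₀*)² ≥ 0. -/
theorem cv_risk_comparison {p : ℕ} (Ω Ωh1 Ωh2 : Matrix (Fin p) (Fin p) ℝ)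
    (c ω₀s ω₀ τ : ℝ) (hc0 : 0 < c) (hc : c ≤ 1 / 3) (hω₀s : 0 < ω₀s)
    (herr1 : ∀ j k, |Ωh1 j k - Ω j k| < c * ω₀s)
    (herr2 : ∀ j k, |Ωh2 j k - Ω j k| < c * ω₀s)
    (hmin : ∀ j k, Ω j k ≠ 0 → ω₀ ≤ |Ω j k|)
    (hωω : ω₀s ≤ ω₀)
    (hτ : ω₀ - c * ω₀s ≤ τ)
    (T : ℝ → Matrix (Fin p) (Fin p) ℝ)
    (hT : ∀ t j k, T t j k = if t ≤ |Ωh1 j k| then Ωh1 j k else 0)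
    (M : ℕ)
    (hM : M = (Finset.univ.filter fun jk : Fin p × Fin p =>
        T (ω₀ - c * ω₀s) jk.1 jk.2 ≠ 0 ∧ T τ jk.1 jk.2 = 0).card) :
    (M : ℝ) * ((ω₀ - c * ω₀s) ^ 2 - (2 * c * ω₀s) ^ 2) ≤
        (∑ j, ∑ k, (T τ j k - Ωh2 j k) ^ 2) -
          (∑ j, ∑ k, (T (ω₀ - c * ω₀s) j k - Ωh2 j k) ^ 2) ∧
      (M : ℝ) * (1 - 3 * c) * (1 + c) * ω₀s ^ 2 ≤
        (M : ℝ) * ((ω₀ - c * ω₀s) ^ 2 - (2 * c * ω₀s) ^ 2) ∧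
      0 ≤ (M : ℝ) * (1 - 3 * c) * (1 + c) * ω₀s ^ 2 := by

  have hτ₀pos : (0:ℝ) < ω₀ - c * ω₀s := by nlinarith
  set S := (Finset.univ.filter fun jk : Fin p × Fin p =>
      T (ω₀ - c * ω₀s) jk.1 jk.2 ≠ 0 ∧ T τ jk.1 jk.2 = 0) with hSdef
  have key : ∀ jk : Fin p × Fin p,
      (if jk ∈ S then ((ω₀ - c * ω₀s) ^ 2 - (2 * c * ω₀s) ^ 2) else 0) ≤
      (T τ jk.1 jk.2 - Ωh2 jk.1 jk.2) ^ 2 -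
        (T (ω₀ - c * ω₀s) jk.1 jk.2 - Ωh2 jk.1 jk.2) ^ 2 := by
    intro jk
    obtain ⟨j, k⟩ := jk
    by_cases hmem : (j, k) ∈ S
    · simp only [hmem, if_true]
      have hprop := (Finset.mem_filter.mp hmem).2
      obtain ⟨h1ne, h2z⟩ := hprop
      have hle : ω₀ - c * ω₀s ≤ |Ωh1 j k| := by
        by_contra h
        rw [hT] at h1ne
        simp [if_neg h] at h1ne
        linarith [h1ne.1, not_le.mp h]
      have hTτ₀ : T (ω₀ - c * ω₀s) j k = Ωh1 j k := by
        rw [hT, if_pos hle]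
      have hΩne : Ω j k ≠ 0 := by
        intro h0
        have := herr1 j k
        rw [h0, sub_zero] at this
        nlinarith
      have hΩ : ω₀ ≤ |Ω j k| := hmin j k hΩne
      have h2 := herr2 j k
      have h1 := herr1 j k
      have hΩh2 : ω₀ - c * ω₀s ≤ |Ωh2 j k| := by
        have := abs_sub_abs_le_abs_sub (Ω j k) (Ωh2 j k)
        rw [abs_sub_comm] at this
        linarith
      have hdiff : |Ωh1 j k - Ωh2 j k| ≤ 2 * c * ω₀s := by
        have := abs_sub (Ωh1 j k - Ω j k) (Ωh2 j k - Ω j k)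
        calc |Ωh1 j k - Ωh2 j k| = |(Ωh1 j k - Ω j k) - (Ωh2 j k - Ω j k)| := by ring_nf
          _ ≤ |Ωh1 j k - Ω j k| + |Ωh2 j k - Ω j k| := abs_sub _ _
          _ ≤ 2 * c * ω₀s := by linarith
      rw [h2z, hTτ₀]
      have e1 : (ω₀ - c * ω₀s) ^ 2 ≤ (Ωh2 j k) ^ 2 := by
        nlinarith [sq_abs (Ωh2 j k), sq_nonneg (|Ωh2 j k| - (ω₀ - c * ω₀s))]
      have e2 : (Ωh1 j k - Ωh2 j k) ^ 2 ≤ (2 * c * ω₀s) ^ 2 := by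
        nlinarith [sq_abs (Ωh1 j k - Ωh2 j k), abs_nonneg (Ωh1 j k - Ωh2 j k)]
      nlinarith [e1, e2]
    · simp only [hmem, if_false]
      have heq : T τ j k = T (ω₀ - c * ω₀s) j k := by
        rw [hT, hT]
        by_cases hca : τ ≤ |Ωh1 j k|
        · rw [if_pos hca, if_pos (le_trans hτ hca)]
        · rw [if_neg hca]
          by_cases hcb : ω₀ - c * ω₀s ≤ |Ωh1 j k|
          · rw [if_pos hcb]
            exfalso
            apply hmem
            rw [hSdef]
            simp only [Finset.mem_filter, Finset.mem_univ, true_and]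
            constructor
            · rw [hT, if_pos hcb]
              intro h0
              have h1 := herr1 j k
              rw [h0] at hcb
              simp at hcb
              linarith
            · rw [hT, if_neg hca]
          · rw [if_neg hcb]
      rw [heq]
      simp
  have hsum : ∑ jk : Fin p × Fin p,
      (if jk ∈ S then ((ω₀ - c * ω₀s) ^ 2 - (2 * c * ω₀s) ^ 2) else 0) ≤
      ∑ jk : Fin p × Fin p, ((T τ jk.1 jk.2 - Ωh2 jk.1 jk.2) ^ 2 -
        (T (ω₀ - c * ω₀s) jk.1 jk.2 - Ωh2 jk.1 jk.2) ^ 2) :=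
    Finset.sum_le_sum fun jk _ => key jk
  rw [Finset.sum_ite_mem, Finset.univ_inter, Finset.sum_const, nsmul_eq_mul,
    Finset.sum_sub_distrib] at hsum
  have hM' : (M : ℝ) = (S.card : ℝ) := by rw [hM, hSdef]
  have hrw1 : ∑ jk : Fin p × Fin p, (T τ jk.1 jk.2 - Ωh2 jk.1 jk.2) ^ 2 =
      ∑ j, ∑ k, (T τ j k - Ωh2 j k) ^ 2 := by
    rw [← Finset.sum_product']
    rfl
  have hrw2 : ∑ jk : Fin p × Fin p,
      (T (ω₀ - c * ω₀s) jk.1 jk.2 - Ωh2 jk.1 jk.2) ^ 2 =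
      ∑ j, ∑ k, (T (ω₀ - c * ω₀s) j k - Ωh2 j k) ^ 2 := by
    rw [← Finset.sum_product']
    rfl
  refine ⟨?_, ?_, ?_⟩
  · rw [hM']
    rw [hrw1, hrw2] at hsum
    exact hsum
  · have hM0 : (0:ℝ) ≤ (M : ℝ) := Nat.cast_nonneg M
    have hfac : 0 ≤ (ω₀ - ω₀s) * (ω₀ + ω₀s - 2 * c * ω₀s) :=
      mul_nonneg (by linarith) (by nlinarith)
    have : (1 - 3 * c) * (1 + c) * ω₀s ^ 2 ≤ (ω₀ - c * ω₀s) ^ 2 - (2 * c * ω₀s) ^ 2 := by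
      nlinarith [hfac]
    nlinarith
  · have hM0 : (0:ℝ) ≤ (M : ℝ) := Nat.cast_nonneg M
    exact mul_nonneg (mul_nonneg (mul_nonneg hM0 (by linarith)) (by linarith)) (sq_nonneg _)
end
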